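/- Fix 1 < p < 2 and let K_p = {(x, y) ∈ ℝ²: |x|^p ≤ y ≤ 1}. Suppose X, Y are 2×2 complex self-adjoint matrices of the form X = [[0, a],[ā, b]], Y = [[0, c],[c̄, d]], such that for every unit vector v ∈ ℂ², (⟨Xv, v⟩, ⟨Yv, v⟩) ∈ K_p. Then a = 0 and c = 0; i.e., the dilation of the point (0,0) is trivial. -/

import Mathlib

open Matrix

private lemma stmt9_dot (a : ℂ) (b : ℝ) (u : ℂ) (s t : ℝ) :
    (dotProduct (star ![(s*u : ℂ), (t:ℂ)]) (!![0, a; (starRingEnd ℂ) a, (b:ℂ)] *ᵥ ![(s*u:ℂ), (t:ℂ)])).re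
      = 2*s*t*((starRingEnd ℂ) u * a).re + b*t^2 := by
  simp [Matrix.mulVec, dotProduct, Fin.sum_univ_two, Complex.add_re, Complex.mul_re]
  ring

private lemma stmt9_norm (u : ℂ) (hu : ‖u‖ = 1) (s t : ℝ) (h : s^2 + t^2 = 1) :
    dotProduct (star ![(s*u : ℂ), (t:ℂ)]) ![(s*u:ℂ), (t:ℂ)] = 1 := by
  have h1 : (starRingEnd ℂ) u * u = 1 := by
    rw [mul_comm, Complex.mul_conj]
    norm_cast
    simp [Complex.normSq_eq_norm_sq, hu]
  have hs2 : (s:ℂ)^2 + (t:ℂ)^2 = 1 := by exact_mod_cast congrArg (Complex.ofReal) h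
  simp only [dotProduct, Fin.sum_univ_two, Matrix.cons_val_zero, Matrix.cons_val_one,
    Matrix.head_cons, Pi.star_apply, Complex.star_def, _root_.map_mul, Complex.conj_ofReal]
  linear_combination (s:ℂ)^2 * h1 + hs2

theorem stmt_9 (p : ℝ) (hp1 : 1 < p) (hp2 : p < 2)
    (a c : ℂ) (b d : ℝ)
    (X Y : Matrix (Fin 2) (Fin 2) ℂ)
    (hX : X = !![0, a; (starRingEnd ℂ) a, (b : ℂ)])
    (hY : Y = !![0, c; (starRingEnd ℂ) c, (d : ℂ)])
    (hnr : ∀ v : Fin 2 → ℂ, dotProduct (star v) v = 1 →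
      |(dotProduct (star v) (X *ᵥ v)).re| ^ p ≤ (dotProduct (star v) (Y *ᵥ v)).re ∧
        (dotProduct (star v) (Y *ᵥ v)).re ≤ 1) :
    a = 0 ∧ c = 0 := by
  subst hX hY
  have key : ∀ (u : ℂ), ‖u‖ = 1 → ∀ t : ℝ, 0 ≤ t → t ≤ 1 →
      |2*Real.sqrt (1-t^2)*t*((starRingEnd ℂ) u * a).re + b*t^2| ^ p
        ≤ 2*Real.sqrt (1-t^2)*t*((starRingEnd ℂ) u * c).re + d*t^2 := by
    intro u hu t ht ht1
    set s := Real.sqrt (1-t^2) with hsdef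
    have hs : s^2 + t^2 = 1 := by
      rw [hsdef, Real.sq_sqrt (by nlinarith)]; ring
    have h1 := (hnr ![(s*u:ℂ), (t:ℂ)] (stmt9_norm u hu s t hs)).1
    rwa [stmt9_dot, stmt9_dot] at h1
  have hhalf : ∀ t : ℝ, 0 ≤ t → t ≤ 1/2 → (1/2:ℝ) ≤ Real.sqrt (1-t^2) := by
    intro t ht ht2
    have h14 : Real.sqrt (1/4) = 1/2 := by
      rw [show (1/4:ℝ) = (1/2)^2 by norm_num, Real.sqrt_sq (by norm_num)]
    rw [← h14]
    exact Real.sqrt_le_sqrt (by nlinarith)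
  -- Step 1 : c = 0
  have hc : c = 0 := by
    by_contra hc
    set nc := ‖c‖ with hncdef
    have hnc : 0 < nc := norm_pos_iff.mpr hc
    have hnc0 : (nc:ℂ) ≠ 0 := by exact_mod_cast hnc.ne'
    set u : ℂ := -(c/nc) with hudef
    have hu : ‖u‖ = 1 := by
      rw [hudef, norm_neg, norm_div, Complex.norm_real, Real.norm_eq_abs, abs_of_pos hnc, ← hncdef,
        div_self hnc.ne']
    have huc : ((starRingEnd ℂ) u * c).re = -nc := by
      have heq : (starRingEnd ℂ) u * c = -(nc:ℂ) := by
        rw [hudef, map_neg, map_div₀, Complex.conj_ofReal, neg_mul, div_mul_eq_mul_div,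
          mul_comm, Complex.mul_conj, Complex.normSq_eq_norm_sq, ← hncdef]
        push_cast
        rw [sq]
        field_simp
      rw [heq]
      simp
    have hstep : ∀ t : ℝ, 0 < t → t ≤ 1/2 → nc ≤ d * t := by
      intro t ht ht2
      have hk := key u hu t ht.le (by linarith)
      rw [huc] at hk
      have h0 : (0:ℝ) ≤ |2*Real.sqrt (1-t^2)*t*((starRingEnd ℂ) u * a).re + b*t^2| ^ p :=
        Real.rpow_nonneg (abs_nonneg _) p
      have hs2 := hhalf t ht.le ht2
      have h2 : 2*Real.sqrt (1-t^2)*t*nc ≤ d * t^2 := by nlinarith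
      nlinarith [h2, mul_pos ht hnc]
    have hd : 0 < d := by
      by_contra hd
      push_neg at hd
      have := hstep (1/2) (by norm_num) le_rfl
      nlinarith
    have h1 := hstep (min (1/2) (nc/(2*d))) (lt_min (by norm_num) (by positivity))
      (min_le_left _ _)
    have h3 : d * min (1/2) (nc/(2*d)) ≤ d * (nc/(2*d)) :=
      mul_le_mul_of_nonneg_left (min_le_right _ _) hd.le
    have h4 : d * (nc/(2*d)) = nc/2 := by field_simp
    linarith
  subst hc
  -- Step 2 : a = 0
  refine ⟨?_, rfl⟩
  by_contra ha
  set na := ‖a‖ with hnadef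
  have hna : 0 < na := norm_pos_iff.mpr ha
  set u : ℂ := a/na with hudef
  have hu : ‖u‖ = 1 := by
    rw [hudef, norm_div, Complex.norm_real, Real.norm_eq_abs, abs_of_pos hna, ← hnadef, div_self hna.ne']
  have hua : ((starRingEnd ℂ) u * a).re = na := by
    have heq : (starRingEnd ℂ) u * a = (na:ℂ) := by
      rw [hudef, map_div₀, Complex.conj_ofReal, div_mul_eq_mul_div, mul_comm,
        Complex.mul_conj, Complex.normSq_eq_norm_sq, ← hnadef]
      push_cast
      rw [sq]
      field_simp
    rw [heq]
    simp
  have huc : ((starRingEnd ℂ) u * 0).re = 0 := by simp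
  set t1 : ℝ := min (1/2) (na/(2*(|b|+1))) with ht1def
  have ht1pos : 0 < t1 := lt_min (by norm_num) (by positivity)
  have hstep : ∀ t : ℝ, 0 < t → t ≤ t1 → (na/2)^p ≤ d * t^(2-p) := by
    intro t ht ht2
    have htt : t ≤ 1/2 := ht2.trans (min_le_left _ _)
    have hk := key u hu t ht.le (by linarith)
    rw [hua, huc] at hk
    simp only [mul_zero, zero_mul, zero_add] at hk
    have hs2 := hhalf t ht.le htt
    have hb : |b| * t ≤ na/2 := by
      have hle : t ≤ na/(2*(|b|+1)) := ht2.trans (min_le_right _ _)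
      have hb1 : |b| * t ≤ |b| * (na/(2*(|b|+1))) :=
        mul_le_mul_of_nonneg_left hle (abs_nonneg b)
      have hb2 : |b| * (na/(2*(|b|+1))) ≤ na/2 := by
        rw [← mul_div_assoc, div_le_div_iff₀ (by positivity) (by norm_num)]
        nlinarith [abs_nonneg b]
      linarith
    have hx : t * na / 2 ≤ 2*Real.sqrt (1-t^2)*t*na + b*t^2 := by
      nlinarith [abs_nonneg b, neg_abs_le b, mul_pos ht hna]
    have hxpos : 0 < t * na / 2 := by positivity
    have hxabs : t * na / 2 ≤ |2*Real.sqrt (1-t^2)*t*na + b*t^2| :=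
      hx.trans (le_abs_self _)
    have hrp : (t * na / 2)^p ≤ |2*Real.sqrt (1-t^2)*t*na + b*t^2| ^ p :=
      Real.rpow_le_rpow hxpos.le hxabs (by linarith)
    have hmain : (t * na / 2)^p ≤ d * t^2 := hrp.trans hk
    have hsplit : (t * na / 2)^p = t^p * (na/2)^p := by
      rw [show t * na / 2 = t * (na/2) by ring, Real.mul_rpow ht.le (by positivity)]
    have htp : (0:ℝ) < t^p := Real.rpow_pos_of_pos ht p
    have ht2eq : t^(2:ℕ) = t^p * t^(2-p) := by
      have h' : t^p * t^(2-p) = t^((2:ℝ)) := by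
        rw [← Real.rpow_add ht]; norm_num
      rw [h', show ((2:ℝ)) = ((2:ℕ):ℝ) by norm_num, Real.rpow_natCast]
    rw [hsplit] at hmain
    rw [show d * t^2 = t^p * (d * t^(2-p)) by rw [ht2eq]; ring] at hmain
    exact le_of_mul_le_mul_left (by linarith [hmain]) htp
  have hd : 0 < d := by
    by_contra hd
    push_neg at hd
    have h1 := hstep t1 ht1pos le_rfl
    have h2 : d * t1^(2-p) ≤ 0 :=
      mul_nonpos_of_nonpos_of_nonneg hd (Real.rpow_nonneg ht1pos.le _)
    have h3 : (0:ℝ) < (na/2)^p := Real.rpow_pos_of_pos (by positivity) p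
    linarith
  set T : ℝ := ((na/2)^p/(2*d))^(1/(2-p)) with hTdef
  have hTpos : 0 < T := Real.rpow_pos_of_pos (by positivity) _
  have h1 := hstep (min t1 T) (lt_min ht1pos hTpos) (min_le_left _ _)
  have h2p : (0:ℝ) < 2 - p := by linarith
  have hT2 : (min t1 T)^(2-p) ≤ (na/2)^p/(2*d) := by
    have hle : (min t1 T)^(2-p) ≤ T^(2-p) :=
      Real.rpow_le_rpow (le_min ht1pos.le hTpos.le) (min_le_right _ _) h2p.le
    have hTeq : T^(2-p) = (na/2)^p/(2*d) := by
      rw [hTdef, ← Real.rpow_mul (by positivity), one_div,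
        inv_mul_cancel₀ (by linarith : (2:ℝ)-p ≠ 0), Real.rpow_one]
    exact hle.trans_eq hTeq
  have h3 : d * (min t1 T)^(2-p) ≤ (na/2)^p/2 := by
    have h5 := mul_le_mul_of_nonneg_left hT2 hd.le
    rw [show d * ((na/2)^p/(2*d)) = (na/2)^p/2 by field_simp] at h5
    linarith
  have h6 : (0:ℝ) < (na/2)^p := Real.rpow_pos_of_pos (by positivity) p
  linarith
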